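/- Induction (truth) lemma for the canonical game G(X₀): for any play (α,δ,ω)∈P and any formula φ of Φ, (α,δ,ω)⊩φ if and only if φ∈hd(ω). -/

import Mathlib

namespace DutyToWarn

/-- The language Φ: propositional variables, negation, implication,
distributed knowledge `K_C φ`, and second-order blameworthiness `B_C^D φ`. -/
inductive Formula (Agent V : Type) : Type
  | var : V → Formula Agent V
  | neg : Formula Agent V → Formula Agent V
  | imp : Formula Agent V → Formula Agent V → Formula Agent V
  | know : Set Agent → Formula Agent V → Formula Agent V
  | blame : Set Agent → Set Agent → Formula Agent V → Formula Agent V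

variable {Agent V B : Type}

namespace Formula

/-- φ ∨ ψ is defined through ¬ and → in the usual way: ¬φ → ψ. -/
def disj (φ ψ : Formula Agent V) : Formula Agent V := imp (neg φ) ψ

/-- φ ∧ ψ is defined through ¬ and → in the usual way: ¬(φ → ¬ψ). -/
def conj (φ ψ : Formula Agent V) : Formula Agent V := neg (imp φ (neg ψ))

/-- φ ↔ ψ is defined as (φ → ψ) ∧ (ψ → φ). -/
def biimp (φ ψ : Formula Agent V) : Formula Agent V := conj (imp φ ψ) (imp ψ φ)

/-- K̄_C φ abbreviates ¬ K_C ¬ φ. -/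
def dknow (C : Set Agent) (φ : Formula Agent V) : Formula Agent V := neg (know C (neg φ))

end Formula

/-- The Boolean constant ⊥, defined through ¬ and →. -/
def falsum [Inhabited V] : Formula Agent V :=
  Formula.neg (Formula.imp (Formula.var default) (Formula.var default))

/-- The disjunction χ₁ ∨ … ∨ χₙ of a list of formulas; for n = 0 it is ⊥. -/
def bigOr [Inhabited V] : List (Formula Agent V) → Formula Agent V
  | [] => falsum
  | [φ] => φ
  | φ :: ψ :: l => φ.disj (bigOr (ψ :: l))

/-- A propositional valuation: any assignment of truth values to formulas
that respects negation and implication (treating K- and B-formulas as atoms). -/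
def IsPropValuation (v : Formula Agent V → Prop) : Prop :=
  (∀ φ : Formula Agent V, v φ.neg ↔ ¬ v φ) ∧
    ∀ φ ψ : Formula Agent V, v (φ.imp ψ) ↔ (v φ → v ψ)

/-- A propositional tautology in the language Φ. -/
def Tautology (φ : Formula Agent V) : Prop :=
  ∀ v : Formula Agent V → Prop, IsPropValuation v → v φ

/-- ⊢ φ : provability from the axioms using Modus Ponens and Necessitation. -/
inductive Provable : Formula Agent V → Prop
  | taut {φ : Formula Agent V} : Tautology φ → Provable φ
  | truthK {C : Set Agent} {φ : Formula Agent V} :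
      Provable ((Formula.know C φ).imp φ)
  | truthB {C D : Set Agent} {φ : Formula Agent V} :
      Provable ((Formula.blame C D φ).imp φ)
  | distr {C : Set Agent} {φ ψ : Formula Agent V} :
      Provable ((Formula.know C (φ.imp ψ)).imp ((Formula.know C φ).imp (Formula.know C ψ)))
  | negIntro {C : Set Agent} {φ : Formula Agent V} :
      Provable ((Formula.know C φ).neg.imp (Formula.know C (Formula.know C φ).neg))
  | monoK {C E : Set Agent} {φ : Formula Agent V} (h : C ⊆ E) :
      Provable ((Formula.know C φ).imp (Formula.know E φ))
  | monoB {C D E F : Set Agent} {φ : Formula Agent V} (h1 : C ⊆ E) (h2 : D ⊆ F) :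
      Provable ((Formula.blame C D φ).imp (Formula.blame E F φ))
  | noneToAct {C : Set Agent} {φ : Formula Agent V} :
      Provable (Formula.neg (Formula.blame C ∅ φ))
  | jointResp {C D E F : Set Agent} {φ ψ : Formula Agent V} (h : D ∩ F = ∅) :
      Provable (((Formula.dknow C (Formula.blame C D φ)).conj
        (Formula.dknow E (Formula.blame E F ψ))).imp
        ((φ.disj ψ).imp (Formula.blame (C ∪ E) (D ∪ F) (φ.disj ψ))))
  | strictCond {C D : Set Agent} {φ ψ : Formula Agent V} :
      Provable ((Formula.know C (φ.imp ψ)).imp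
        ((Formula.blame C D ψ).imp (φ.imp (Formula.blame C D φ))))
  | introB {C D : Set Agent} {φ : Formula Agent V} :
      Provable ((Formula.blame C D φ).imp (Formula.know C (φ.imp (Formula.blame C D φ))))
  | mp {φ ψ : Formula Agent V} : Provable (φ.imp ψ) → Provable φ → Provable ψ
  | nec {C : Set Agent} {φ : Formula Agent V} : Provable φ → Provable (Formula.know C φ)

/-- X ⊢ φ : provability from the theorems of the system together with the
additional hypotheses X, using only Modus Ponens. -/
inductive ProvableFrom (X : Set (Formula Agent V)) : Formula Agent V → Prop
  | hyp {φ : Formula Agent V} (h : φ ∈ X) : ProvableFrom X φ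
  | thm {φ : Formula Agent V} (h : Provable φ) : ProvableFrom X φ
  | mp {φ ψ : Formula Agent V} (h1 : ProvableFrom X (φ.imp ψ)) (h2 : ProvableFrom X φ) :
      ProvableFrom X ψ

/-- A game (Definition 1). -/
structure Game (Agent V : Type) where
  I : Type
  Δ : Type
  Ω : Type
  sim : Agent → I → I → Prop
  sim_equiv : ∀ a : Agent, Equivalence (sim a)
  P : Set (I × (Agent → Δ) × Ω)
  play_exists : ∀ (α : I) (δ : Agent → Δ), ∃ ω : Ω, (α, δ, ω) ∈ P
  π : V → Set (I × (Agent → Δ) × Ω)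
  π_sub : ∀ p : V, π p ⊆ P

/-- α ∼_C α' : indistinguishability by a coalition. -/
def Game.simC (G : Game Agent V) (C : Set Agent) (α α' : G.I) : Prop :=
  ∀ a ∈ C, G.sim a α α'

/-- Satisfiability (α,δ,ω) ⊩ φ (Definition 2). -/
def Game.Sat (G : Game Agent V) :
    Formula Agent V → (G.I × (Agent → G.Δ) × G.Ω) → Prop
  | Formula.var p, x => x ∈ G.π p
  | Formula.neg φ, x => ¬ G.Sat φ x
  | Formula.imp φ ψ, x => G.Sat φ x → G.Sat ψ x
  | Formula.know C φ, x => ∀ x' ∈ G.P, G.simC C x.1 x'.1 → G.Sat φ x'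
  | Formula.blame C D φ, x => G.Sat φ x ∧
      ∃ s : Agent → G.Δ, ∀ x' ∈ G.P, G.simC C x.1 x'.1 →
        (∀ a ∈ D, s a = x'.2.1 a) → ¬ G.Sat φ x'

/-- A set of formulas is consistent if no contradiction is derivable from it. -/
def Consistent (X : Set (Formula Agent V)) : Prop :=
  ¬ ∃ φ : Formula Agent V, ProvableFrom X φ ∧ ProvableFrom X φ.neg

/-- A maximal consistent set: consistent with no proper consistent extension. -/
def MaxConsistent (X : Set (Formula Agent V)) : Prop :=
  Consistent X ∧ ∀ Y : Set (Formula Agent V), X ⊆ Y → Consistent Y → Y = X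

/-- One step (Cᵢ,bᵢ),Xᵢ of a sequence in the set of outcomes of the canonical game. -/
abbrev Step (Agent V B : Type) : Type := Set Agent × B × Set (Formula Agent V)

/-- Validity of a sequence X₀,(C₁,b₁),X₁,…,(Cₙ,bₙ),Xₙ : each Xᵢ is maximal
consistent and {φ | K_{Cᵢ} φ ∈ X_{i-1}} ⊆ Xᵢ. -/
def ValidSeq (X₀ : Set (Formula Agent V)) : List (Step Agent V B) → Prop
  | [] => True
  | (C, _, X) :: l =>
      MaxConsistent X ∧ (∀ φ : Formula Agent V, Formula.know C φ ∈ X₀ → φ ∈ X) ∧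
        ValidSeq X l

/-- The set Ω of outcomes of the canonical game G(X₀): valid sequences starting at X₀
(the sequence of steps after X₀ is recorded). -/
def COutcome (X₀ : Set (Formula Agent V)) (B : Type) : Type :=
  {l : List (Step Agent V B) // ValidSeq X₀ l}

/-- The last maximal consistent set of a sequence. -/
def hdSeq (X₀ : Set (Formula Agent V)) : List (Step Agent V B) → Set (Formula Agent V)
  | [] => X₀
  | (_, _, X) :: l => hdSeq X l

/-- hd(ω) : the last maximal consistent set of the outcome ω. -/
def chd {X₀ : Set (Formula Agent V)} (ω : COutcome X₀ B) : Set (Formula Agent V) :=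
  hdSeq X₀ ω.1

/-- ω ∼_a ω' in the Tree of Knowledge: all edges along the unique path between
ω and ω' are labeled with agent a, i.e. there is a common ancestor w such that
every edge from w down to ω and from w down to ω' is labeled with a. -/
def csimA {X₀ : Set (Formula Agent V)} (a : Agent) (u v : COutcome X₀ B) : Prop :=
  ∃ w t t' : List (Step Agent V B),
    u.1 = w ++ t ∧ v.1 = w ++ t' ∧ (∀ s ∈ t, a ∈ s.1) ∧ (∀ s ∈ t', a ∈ s.1)

/-- ω ∼_C ω' iff ω ∼_a ω' for each a ∈ C. -/
def csimC {X₀ : Set (Formula Agent V)} (C : Set Agent) (u v : COutcome X₀ B) : Prop :=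
  ∀ a ∈ C, csimA a u v

/-- The relation ∼_𝒜 on outcomes. -/
def crel (X₀ : Set (Formula Agent V)) (B : Type) : COutcome X₀ B → COutcome X₀ B → Prop :=
  csimC (Set.univ : Set Agent)

/-- The set I of initial states of the canonical game: I = Ω/∼_𝒜. -/
def CI (X₀ : Set (Formula Agent V)) (B : Type) : Type :=
  Quot (crel X₀ B)

/-- The equivalence class of an outcome. -/
def ctoI {X₀ : Set (Formula Agent V)} (u : COutcome X₀ B) : CI X₀ B :=
  Quot.mk (crel X₀ B) u

/-- The relation α ∼_C α' on I, induced on representatives. -/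
def IsimC {X₀ : Set (Formula Agent V)} (C : Set Agent) (α α' : CI X₀ B) : Prop :=
  ∃ u v : COutcome X₀ B, ctoI u = α ∧ ctoI v = α' ∧ csimC C u v

/-- The domain of actions of the canonical game: Δ = {(φ,C,ω)}. -/
abbrev CAct (X₀ : Set (Formula Agent V)) (B : Type) : Type :=
  Formula Agent V × Set Agent × COutcome X₀ B

/-- Triples (α, δ, ω) over the canonical game. -/
abbrev CPlay (X₀ : Set (Formula Agent V)) (B : Type) : Type :=
  CI X₀ B × (Agent → CAct X₀ B) × COutcome X₀ B

/-- The set P of plays of the canonical game (Definition 13). -/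
def CP (X₀ : Set (Formula Agent V)) (B : Type) : Set (CPlay X₀ B) :=
  {x | ctoI x.2.2 = x.1 ∧
    ∀ (v : COutcome X₀ B) (C D : Set Agent) (ψ : Formula Agent V),
      Formula.dknow C (Formula.blame C D ψ) ∈ chd v →
      (∀ a ∈ D, x.2.1 a = (ψ, C, v)) →
      csimC C x.2.2 v →
      Formula.neg ψ ∈ chd x.2.2}

/-- π(p) in the canonical game. -/
def Cπ (X₀ : Set (Formula Agent V)) (B : Type) (p : V) : Set (CPlay X₀ B) :=
  {x | x ∈ CP X₀ B ∧ Formula.var p ∈ chd x.2.2}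

/-- Satisfiability in the canonical game G(X₀) (Definition 2 instantiated). -/
def CSat (X₀ : Set (Formula Agent V)) (B : Type) :
    Formula Agent V → CPlay X₀ B → Prop
  | Formula.var p, x => x ∈ Cπ X₀ B p
  | Formula.neg φ, x => ¬ CSat X₀ B φ x
  | Formula.imp φ ψ, x => CSat X₀ B φ x → CSat X₀ B ψ x
  | Formula.know C φ, x => ∀ x' ∈ CP X₀ B, IsimC C x.1 x'.1 → CSat X₀ B φ x'
  | Formula.blame C D φ, x => CSat X₀ B φ x ∧
      ∃ s : Agent → CAct X₀ B, ∀ x' ∈ CP X₀ B, IsimC C x.1 x'.1 →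
        (∀ a ∈ D, s a = x'.2.1 a) → ¬ CSat X₀ B φ x'

open Classical

section Aux
variable {Agent V B : Type}

local notation "F" => Formula Agent V

/-! ### Tautology and Provable helpers -/

lemma taut_of (φ : F)
    (h : ∀ v : F → Prop, (∀ χ : F, v χ.neg ↔ ¬ v χ) →
      (∀ χ ψ : F, v (χ.imp ψ) ↔ (v χ → v ψ)) → v φ) : Tautology φ :=
  fun v hv => h v hv.1 hv.2

lemma P_id (φ : F) : Provable (φ.imp φ) :=
  Provable.taut (taut_of _ (by intro v hn hi; simp only [hn, hi]; tauto))

lemma P_trans {a b c : F} (h1 : Provable (a.imp b)) (h2 : Provable (b.imp c)) :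
    Provable (a.imp c) := by
  have t : Provable ((a.imp b).imp ((b.imp c).imp (a.imp c))) :=
    Provable.taut (taut_of _ (by intro v hn hi; simp only [hn, hi]; tauto))
  exact (t.mp h1).mp h2

lemma P_contra {a b : F} (h : Provable (a.imp b)) : Provable (b.neg.imp a.neg) := by
  have t : Provable ((a.imp b).imp (b.neg.imp a.neg)) :=
    Provable.taut (taut_of _ (by intro v hn hi; simp only [hn, hi]; tauto))
  exact t.mp h

lemma P_kmap {E : Set Agent} {a b : F} (h : Provable (a.imp b)) :
    Provable ((Formula.know E a).imp (Formula.know E b)) :=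
  Provable.distr.mp (Provable.nec h)

lemma P_dkmap {E : Set Agent} {a b : F} (h : Provable (a.imp b)) :
    Provable ((Formula.dknow E a).imp (Formula.dknow E b)) := by
  unfold Formula.dknow
  exact P_contra (P_kmap (P_contra h))

/-- contrapositive of Negative Introspection : ¬K¬Kφ → Kφ -/
lemma P_five' {E : Set Agent} {a : F} :
    Provable ((Formula.know E (Formula.know E a).neg).neg.imp (Formula.know E a)) := by
  have h5 : Provable ((Formula.know E a).neg.imp
      (Formula.know E (Formula.know E a).neg)) := Provable.negIntro
  have := P_contra h5
  have t : Provable (((Formula.know E (Formula.know E a).neg).neg.imp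
        (Formula.know E a).neg.neg).imp
      ((Formula.know E (Formula.know E a).neg).neg.imp (Formula.know E a))) :=
    Provable.taut (taut_of _ (by intro v hn hi; simp only [hn, hi]; tauto))
  exact t.mp this

/-- Brouwer: φ → K¬K¬φ -/
lemma P_B {E : Set Agent} {a : F} :
    Provable (a.imp (Formula.know E (Formula.know E a.neg).neg)) := by
  have ht : Provable ((Formula.know E a.neg).imp a.neg) := Provable.truthK
  have h1 : Provable (a.imp (Formula.know E a.neg).neg) := by
    have := P_contra ht
    have t : Provable ((a.neg.neg.imp (Formula.know E a.neg).neg).imp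
        (a.imp (Formula.know E a.neg).neg)) :=
      Provable.taut (taut_of _ (by intro v hn hi; simp only [hn, hi]; tauto))
    exact t.mp this
  have h5 : Provable ((Formula.know E a.neg).neg.imp
      (Formula.know E (Formula.know E a.neg).neg)) := Provable.negIntro
  exact P_trans h1 h5

/-- Positive introspection: Kφ → KKφ -/
lemma P_four {E : Set Agent} {a : F} :
    Provable ((Formula.know E a).imp (Formula.know E (Formula.know E a))) := by
  have hb : Provable ((Formula.know E a).imp
      (Formula.know E (Formula.know E (Formula.know E a).neg).neg)) := P_B
  exact P_trans hb (P_kmap P_five')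

/-- K̄_C B_C^D ψ → (ψ → B_C^D ψ) -/
lemma P_blame_of_dknow {C D : Set Agent} {ψ : F} :
    Provable ((Formula.dknow C (Formula.blame C D ψ)).imp
      (ψ.imp (Formula.blame C D ψ))) := by
  set b : F := Formula.blame C D ψ with hbdef
  have hintro : Provable (b.imp (Formula.know C (ψ.imp b))) := Provable.introB
  have h2 : Provable ((Formula.know C (ψ.imp b)).neg.imp b.neg) := by
    have := P_contra hintro
    have t : Provable ((b.neg.neg.imp (Formula.know C (ψ.imp b)).neg.neg).imp
        ((Formula.know C (ψ.imp b)).neg.imp b.neg)) :=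
      Provable.taut (taut_of _ (by intro v hn hi; simp only [hn, hi]; tauto))
    exact t.mp (P_contra this)
  -- ¬K(ψ→b) → K¬K(ψ→b) → K¬b
  have h3 : Provable ((Formula.know C (ψ.imp b)).neg.imp
      (Formula.know C b.neg)) :=
    P_trans Provable.negIntro (P_kmap h2)
  -- contrapositive: ¬K¬b → K(ψ→b) modulo double negation
  have h4 : Provable ((Formula.know C b.neg).neg.imp (ψ.imp b)) := by
    have := P_contra h3
    have t : Provable (((Formula.know C b.neg).neg.imp
          (Formula.know C (ψ.imp b)).neg.neg).imp
        ((Formula.know C b.neg).neg.imp (Formula.know C (ψ.imp b)))) :=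
      Provable.taut (taut_of _ (by intro v hn hi; simp only [hn, hi]; tauto))
    exact P_trans (t.mp this) Provable.truthK
  exact h4

/-! ### ProvableFrom lemmas -/

lemma PF_mono {X Y : Set F} {φ : F} (h : X ⊆ Y) (hp : ProvableFrom X φ) :
    ProvableFrom Y φ := by
  induction hp with
  | hyp h' => exact ProvableFrom.hyp (h h')
  | thm h' => exact ProvableFrom.thm h'
  | mp h1 h2 ih1 ih2 => exact ih1.mp ih2

lemma PF_of_provable {X : Set F} {φ : F} (h : Provable φ) : ProvableFrom X φ :=
  ProvableFrom.thm h

lemma PF_empty {φ : F} (h : ProvableFrom (∅ : Set F) φ) : Provable φ := by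
  generalize hX : (∅ : Set F) = X at h
  induction h with
  | hyp h' => rw [← hX] at h'; exact absurd h' (Set.notMem_empty _)
  | thm h' => exact h'
  | mp _ _ ih1 ih2 => exact ih1.mp ih2

/-- Deduction theorem. -/
lemma PF_ded {X : Set F} {φ ψ : F} (h : ProvableFrom (insert φ X) ψ) :
    ProvableFrom X (φ.imp ψ) := by
  generalize hX : insert φ X = Y at h
  induction h with
  | @hyp χ h' =>
    rw [← hX] at h'
    rcases h' with h' | h'
    · exact PF_of_provable (h' ▸ P_id φ)
    · have t : Provable (χ.imp (φ.imp χ)) :=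
        Provable.taut (taut_of _ (by intro v hn hi; simp only [hn, hi]; tauto))
      exact (PF_of_provable t).mp (ProvableFrom.hyp h')
  | @thm χ h' =>
    have t : Provable (χ.imp (φ.imp χ)) :=
      Provable.taut (taut_of _ (by intro v hn hi; simp only [hn, hi]; tauto))
    exact PF_of_provable (t.mp h')
  | @mp χ ψ' _ _ ih1 ih2 =>
    have t : Provable ((φ.imp (χ.imp ψ')).imp ((φ.imp χ).imp (φ.imp ψ'))) :=
      Provable.taut (taut_of _ (by intro v hn hi; simp only [hn, hi]; tauto))
    exact ((PF_of_provable t).mp ih1).mp ih2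

lemma PF_cut {X Y : Set F} {φ : F} (hX : ∀ ψ ∈ X, ProvableFrom Y ψ)
    (h : ProvableFrom X φ) : ProvableFrom Y φ := by
  induction h with
  | hyp h' => exact hX _ h'
  | thm h' => exact ProvableFrom.thm h'
  | mp h1 h2 ih1 ih2 => exact ih1.mp ih2

/-- Compactness. -/
lemma PF_compact {X : Set F} {φ : F} (h : ProvableFrom X φ) :
    ∃ l : List F, (∀ ψ ∈ l, ψ ∈ X) ∧ ProvableFrom {ψ | ψ ∈ l} φ := by
  induction h with
  | @hyp χ h' =>
    exact ⟨[χ], by simpa using h', ProvableFrom.hyp (by simp)⟩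
  | thm h' => exact ⟨[], by simp, ProvableFrom.thm h'⟩
  | @mp χ ψ h1 h2 ih1 ih2 =>
    obtain ⟨l1, hl1, hp1⟩ := ih1
    obtain ⟨l2, hl2, hp2⟩ := ih2
    refine ⟨l1 ++ l2, ?_, ?_⟩
    · intro ψ' h'; rcases List.mem_append.1 h' with h' | h'
      · exact hl1 _ h'
      · exact hl2 _ h'
    · have hs1 : ProvableFrom {ψ' : F | ψ' ∈ l1 ++ l2} (χ.imp ψ) :=
        PF_mono (by intro z hz; simp only [Set.mem_setOf_eq, List.mem_append]; exact Or.inl hz) hp1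
      have hs2 : ProvableFrom {ψ' : F | ψ' ∈ l1 ++ l2} χ :=
        PF_mono (by intro z hz; simp only [Set.mem_setOf_eq, List.mem_append]; exact Or.inr hz) hp2
      exact hs1.mp hs2

/-! ### Consistency and maximal consistent sets -/

lemma incon_all {X : Set F} (h : ¬ Consistent X) (ψ : F) : ProvableFrom X ψ := by
  rw [Consistent, not_not] at h
  obtain ⟨χ, h1, h2⟩ := h
  have t : Provable (χ.imp (χ.neg.imp ψ)) :=
    Provable.taut (taut_of _ (by intro v hn hi; simp only [hn, hi]; tauto))
  exact (((PF_of_provable t).mp h1).mp h2)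

lemma MaxConsistent.mem_of_pf {X : Set F} (hX : MaxConsistent X) {φ : F}
    (h : ProvableFrom X φ) : φ ∈ X := by
  have hcons : Consistent (insert φ X) := by
    intro ⟨χ, h1, h2⟩
    exact hX.1 ⟨χ, (PF_ded h1).mp h, (PF_ded h2).mp h⟩
  have := hX.2 (insert φ X) (Set.subset_insert _ _) hcons
  rw [← this]; exact Set.mem_insert _ _

lemma MaxConsistent.mem_of_provable {X : Set F} (hX : MaxConsistent X) {φ : F}
    (h : Provable φ) : φ ∈ X := hX.mem_of_pf (PF_of_provable h)

lemma MaxConsistent.mp' {X : Set F} (hX : MaxConsistent X) {φ ψ : F}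
    (h : φ.imp ψ ∈ X) (h2 : φ ∈ X) : ψ ∈ X :=
  hX.mem_of_pf ((ProvableFrom.hyp h).mp (ProvableFrom.hyp h2))

lemma MaxConsistent.mpp {X : Set F} (hX : MaxConsistent X) {φ ψ : F}
    (h : Provable (φ.imp ψ)) (h2 : φ ∈ X) : ψ ∈ X :=
  hX.mem_of_pf ((PF_of_provable h).mp (ProvableFrom.hyp h2))

lemma MaxConsistent.not_both {X : Set F} (hX : MaxConsistent X) {φ : F}
    (h1 : φ ∈ X) (h2 : φ.neg ∈ X) : False :=
  hX.1 ⟨φ, ProvableFrom.hyp h1, ProvableFrom.hyp h2⟩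

lemma MaxConsistent.neg_mem_iff {X : Set F} (hX : MaxConsistent X) {φ : F} :
    φ.neg ∈ X ↔ φ ∉ X := by
  constructor
  · intro h h'; exact hX.not_both h' h
  · intro h
    have hcons : Consistent (insert φ.neg X) := by
      intro ⟨χ, h1, h2⟩
      have d1 := PF_ded h1
      have d2 := PF_ded h2
      have t : Provable ((φ.neg.imp χ).imp ((φ.neg.imp χ.neg).imp φ)) :=
        Provable.taut (taut_of _ (by intro v hn hi; simp only [hn, hi]; tauto))
      have : ProvableFrom X φ := ((PF_of_provable t).mp d1).mp d2
      exact h (hX.mem_of_pf this)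
    have := hX.2 _ (Set.subset_insert _ _) hcons
    rw [← this]; exact Set.mem_insert _ _

lemma MaxConsistent.imp_mem_iff {X : Set F} (hX : MaxConsistent X) {φ ψ : F} :
    φ.imp ψ ∈ X ↔ (φ ∈ X → ψ ∈ X) := by
  constructor
  · intro h h2; exact hX.mp' h h2
  · intro h
    by_cases hφ : φ ∈ X
    · have t : Provable (ψ.imp (φ.imp ψ)) :=
        Provable.taut (taut_of _ (by intro v hn hi; simp only [hn, hi]; tauto))
      exact hX.mpp t (h hφ)
    · have hn := hX.neg_mem_iff.2 hφ
      have t : Provable (φ.neg.imp (φ.imp ψ)) :=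
        Provable.taut (taut_of _ (by intro v hn hi; simp only [hn, hi]; tauto))
      exact hX.mpp t hn

lemma MaxConsistent.disj_mem_iff {X : Set F} (hX : MaxConsistent X) {φ ψ : F} :
    φ.disj ψ ∈ X ↔ (φ ∈ X ∨ ψ ∈ X) := by
  unfold Formula.disj
  rw [hX.imp_mem_iff, hX.neg_mem_iff]
  tauto

lemma MaxConsistent.conj_mem {X : Set F} (hX : MaxConsistent X) {φ ψ : F}
    (h1 : φ ∈ X) (h2 : ψ ∈ X) : φ.conj ψ ∈ X := by
  have t : Provable (φ.imp (ψ.imp (φ.conj ψ))) :=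
    Provable.taut (taut_of _ (by
      intro v hn hi
      simp only [Formula.conj, hn, hi]
      tauto))
  exact hX.mp' (hX.mpp t h1) h2

/-- Lindenbaum lemma. -/
lemma lindenbaum {X : Set F} (hX : Consistent X) :
    ∃ Y : Set F, X ⊆ Y ∧ MaxConsistent Y := by
  obtain ⟨M, hM⟩ := zorn_subset_nonempty {Y : Set F | Consistent Y}
    (fun c hc hchain hne => by
      refine ⟨⋃₀ c, ?_, fun s hs => Set.subset_sUnion_of_mem hs⟩
      intro ⟨χ, h1, h2⟩
      obtain ⟨l1, hl1, hp1⟩ := PF_compact h1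
      obtain ⟨l2, hl2, hp2⟩ := PF_compact h2
      -- find a single element of the chain containing all of l1 ++ l2
      have : ∃ s ∈ c, ∀ ψ ∈ l1 ++ l2, ψ ∈ s := by
        obtain ⟨s0, hs0⟩ := hne
        have : ∀ l : List F, (∀ ψ ∈ l, ψ ∈ ⋃₀ c) → ∃ s ∈ c, ∀ ψ ∈ l, ψ ∈ s := by
          intro l
          induction l with
          | nil => intro _; exact ⟨s0, hs0, by simp⟩
          | cons ψ l ih =>
            intro hmem
            obtain ⟨s, hs, hls⟩ := ih (fun χ' h => hmem _ (List.mem_cons_of_mem _ h))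
            obtain ⟨s', hs', hψ⟩ := hmem ψ (List.mem_cons_self)
            rcases hchain.total hs hs' with hss | hss
            · exact ⟨s', hs', fun χ' h => by
                rcases List.mem_cons.1 h with rfl | h
                · exact hψ
                · exact hss (hls _ h)⟩
            · exact ⟨s, hs, fun χ' h => by
                rcases List.mem_cons.1 h with rfl | h
                · exact hss hψ
                · exact hls _ h⟩
        exact this (l1 ++ l2) (fun ψ h => by
          rcases List.mem_append.1 h with h | h
          · exact hl1 _ h
          · exact hl2 _ h)
      obtain ⟨s, hsc, hall⟩ := this
      have hcs : Consistent s := hc hsc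
      exact hcs ⟨χ,
        PF_cut (fun ψ h => ProvableFrom.hyp (hall _ (List.mem_append.2 (Or.inl h)))) hp1,
        PF_cut (fun ψ h => ProvableFrom.hyp (hall _ (List.mem_append.2 (Or.inr h)))) hp2⟩)
    X hX
  obtain ⟨hXM, hMmax⟩ := hM
  exact ⟨M, hXM, hMmax.prop, fun Y hMY hY => hMmax.eq_of_ge hY hMY⟩

end Aux

/-! ### Longest common prefix -/

def lcp [DecidableEq α] : List α → List α → List α
  | a :: as, b :: bs => if a = b then a :: lcp as bs else []
  | _, _ => []

lemma lcp_prefix_left [DecidableEq α] : ∀ l₁ l₂ : List α, lcp l₁ l₂ <+: l₁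
  | [], _ => by simp [lcp]
  | _ :: _, [] => by simp [lcp]
  | a :: as, b :: bs => by
    by_cases h : a = b
    · simpa [lcp, h] using lcp_prefix_left as bs
    · simp [lcp, h]

lemma lcp_prefix_right [DecidableEq α] : ∀ l₁ l₂ : List α, lcp l₁ l₂ <+: l₂
  | [], _ => by simp [lcp]
  | _ :: _, [] => by simp [lcp]
  | a :: as, b :: bs => by
    by_cases h : a = b
    · subst h; simpa [lcp] using lcp_prefix_right as bs
    · simp [lcp, h]

lemma prefix_lcp [DecidableEq α] : ∀ {p l₁ l₂ : List α},
    p <+: l₁ → p <+: l₂ → p <+: lcp l₁ l₂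
  | [], _, _, _, _ => List.nil_prefix
  | a :: p, l₁, l₂, h₁, h₂ => by
    match l₁, l₂ with
    | [], _ => exact absurd (List.eq_nil_of_prefix_nil h₁) (by simp)
    | _ :: _, [] => exact absurd (List.eq_nil_of_prefix_nil h₂) (by simp)
    | b :: bs, c :: cs =>
      obtain ⟨rfl, hp₁⟩ := List.cons_prefix_cons.1 h₁
      obtain ⟨rfl, hp₂⟩ := List.cons_prefix_cons.1 h₂
      simpa [lcp] using prefix_lcp hp₁ hp₂

section Aux2
variable {Agent V B : Type}
local notation "F" => Formula Agent V

/-! ### Appending valid sequences -/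

lemma hdSeq_append (Z : Set F) (l₁ l₂ : List (Step Agent V B)) :
    hdSeq Z (l₁ ++ l₂) = hdSeq (hdSeq Z l₁) l₂ := by
  induction l₁ generalizing Z with
  | nil => rfl
  | cons s l ih => obtain ⟨C, b, X⟩ := s; simp only [List.cons_append, hdSeq]; exact ih X

lemma validSeq_append {Z : Set F} {l₁ l₂ : List (Step Agent V B)} :
    ValidSeq Z (l₁ ++ l₂) ↔ ValidSeq Z l₁ ∧ ValidSeq (hdSeq Z l₁) l₂ := by
  induction l₁ generalizing Z with
  | nil => simp [ValidSeq, hdSeq]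
  | cons s l ih =>
    obtain ⟨C, b, X⟩ := s
    simp only [List.cons_append, ValidSeq, hdSeq, List.append_eq, ih]
    tauto

lemma maxcons_hdSeq {Z : Set F} (hZ : MaxConsistent Z) :
    ∀ {l : List (Step Agent V B)}, ValidSeq Z l → MaxConsistent (hdSeq Z l)
  | [], _ => hZ
  | (C, b, X) :: l, h => maxcons_hdSeq h.1 h.2.2

lemma chd_mcs {X₀ : Set F} (hX₀ : MaxConsistent X₀) (u : COutcome X₀ B) :
    MaxConsistent (chd u) := maxcons_hdSeq hX₀ u.2

/-! ### Decomposition of coalition indistinguishability -/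

lemma csimC_decomp {X₀ : Set F} {E : Set Agent} {u v : COutcome X₀ B}
    (h : csimC E u v) :
    ∃ p t t' : List (Step Agent V B), u.1 = p ++ t ∧ v.1 = p ++ t' ∧
      (∀ st ∈ t, ∀ a ∈ E, a ∈ st.1) ∧ (∀ st ∈ t', ∀ a ∈ E, a ∈ st.1) := by
  classical
  set p := lcp u.1 v.1 with hp
  obtain ⟨t, ht⟩ := lcp_prefix_left u.1 v.1
  obtain ⟨t', ht'⟩ := lcp_prefix_right u.1 v.1
  refine ⟨p, t, t', ht.symm, ht'.symm, ?_, ?_⟩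
  · intro st hst a ha
    obtain ⟨w, s, s', hu, hv, hs, hs'⟩ := h a ha
    have hwp : w <+: p := prefix_lcp ⟨s, hu.symm⟩ ⟨s', hv.symm⟩
    obtain ⟨r, hr⟩ := hwp
    have : s = r ++ t := by
      have : w ++ s = w ++ (r ++ t) := by
        rw [← List.append_assoc, hr, ht, ← hu]
      exact (List.append_right_inj w).1 this
    exact hs st (this ▸ List.mem_append.2 (Or.inr hst))
  · intro st hst a ha
    obtain ⟨w, s, s', hu, hv, hs, hs'⟩ := h a ha
    have hwp : w <+: p := prefix_lcp ⟨s, hu.symm⟩ ⟨s', hv.symm⟩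
    obtain ⟨r, hr⟩ := hwp
    have : s' = r ++ t' := by
      have : w ++ s' = w ++ (r ++ t') := by
        rw [← List.append_assoc, hr, ht', ← hv]
      exact (List.append_right_inj w).1 this
    exact hs' st (this ▸ List.mem_append.2 (Or.inr hst))

/-! ### Propagation of knowledge along labeled paths -/

lemma know_step {W X' : Set F} (hW : MaxConsistent W) (hX' : MaxConsistent X')
    {C₁ E : Set Agent} (hedge : ∀ χ : F, Formula.know C₁ χ ∈ W → χ ∈ X')
    (hE : E ⊆ C₁) (χ : F) :
    Formula.know E χ ∈ W ↔ Formula.know E χ ∈ X' := by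
  constructor
  · intro h
    have h4 : Formula.know E (Formula.know E χ) ∈ W := hW.mpp P_four h
    have : Formula.know C₁ (Formula.know E χ) ∈ W := hW.mpp (Provable.monoK hE) h4
    exact hedge _ this
  · intro h
    by_contra hne
    have hneg : (Formula.know E χ).neg ∈ W := hW.neg_mem_iff.2 hne
    have h5 : Formula.know E (Formula.know E χ).neg ∈ W := hW.mpp Provable.negIntro hneg
    have : Formula.know C₁ (Formula.know E χ).neg ∈ W := hW.mpp (Provable.monoK hE) h5
    have := hedge _ this
    exact hX'.not_both h this

lemma know_along {E : Set Agent} (χ : F) :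
    ∀ (t : List (Step Agent V B)) (Z : Set F), MaxConsistent Z → ValidSeq Z t →
    (∀ st ∈ t, E ⊆ st.1) →
    (Formula.know E χ ∈ Z ↔ Formula.know E χ ∈ hdSeq Z t)
  | [], Z, _, _, _ => Iff.rfl
  | (C₁, b, X') :: t, Z, hZ, hv, hlab => by
    have hX' : MaxConsistent X' := hv.1
    have step := know_step hZ hX' hv.2.1 (hlab (C₁, b, X') (List.mem_cons_self)) χ
    have rest := know_along (E := E) χ t X' hX' hv.2.2
      (fun st hst => hlab st (List.mem_cons_of_mem _ hst))
    exact step.trans rest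

lemma know_propagate {X₀ : Set F} (hX₀ : MaxConsistent X₀)
    {E : Set Agent} {u v : COutcome X₀ B} (h : csimC E u v) (χ : F) :
    (Formula.know E χ ∈ chd u ↔ Formula.know E χ ∈ chd v) := by
  obtain ⟨p, t, t', hu, hv, hlt, hlt'⟩ := csimC_decomp h
  have hvu := u.2; have hvv := v.2
  rw [hu] at hvu; rw [hv] at hvv
  have hup := (validSeq_append.1 hvu)
  have hvp := (validSeq_append.1 hvv)
  have hW : MaxConsistent (hdSeq X₀ p) := maxcons_hdSeq hX₀ hup.1
  have h1 : Formula.know E χ ∈ hdSeq X₀ p ↔ Formula.know E χ ∈ chd u := by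
    rw [chd, hu, hdSeq_append]
    exact know_along χ t _ hW hup.2 (fun st hst a ha => hlt st hst a ha)
  have h2 : Formula.know E χ ∈ hdSeq X₀ p ↔ Formula.know E χ ∈ chd v := by
    rw [chd, hv, hdSeq_append]
    exact know_along χ t' _ hW hvp.2 (fun st hst a ha => hlt' st hst a ha)
  exact h1.symm.trans h2

lemma dknow_propagate {X₀ : Set F} (hX₀ : MaxConsistent X₀)
    {E : Set Agent} {u v : COutcome X₀ B} (h : csimC E u v) {χ : F}
    (hm : Formula.dknow E χ ∈ chd u) : Formula.dknow E χ ∈ chd v := by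
  have hu := chd_mcs hX₀ u
  have hv := chd_mcs hX₀ v
  rw [Formula.dknow, hu.neg_mem_iff] at hm
  rw [Formula.dknow, hv.neg_mem_iff]
  intro h'
  exact hm ((know_propagate hX₀ h _).2 h')

/-! ### csim is an equivalence -/

lemma csimA_refl {X₀ : Set F} (a : Agent) (u : COutcome X₀ B) : csimA a u u :=
  ⟨u.1, [], [], by simp, by simp, by simp, by simp⟩

lemma csimA_symm {X₀ : Set F} {a : Agent} {u v : COutcome X₀ B}
    (h : csimA a u v) : csimA a v u := by
  obtain ⟨w, t, t', h1, h2, h3, h4⟩ := h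
  exact ⟨w, t', t, h2, h1, h4, h3⟩

lemma csimA_trans {X₀ : Set F} {a : Agent} {u v z : COutcome X₀ B}
    (h : csimA a u v) (h' : csimA a v z) : csimA a u z := by
  obtain ⟨w, t, t', h1, h2, h3, h4⟩ := h
  obtain ⟨w₂, s, s', g1, g2, g3, g4⟩ := h'
  rcases List.prefix_or_prefix_of_prefix (⟨t', h2.symm⟩ : w <+: v.1)
      (⟨s, g1.symm⟩ : w₂ <+: v.1) with hp | hp
  · obtain ⟨r, rfl⟩ := hp
    have hts : t' = r ++ s := by
      have : w ++ t' = w ++ (r ++ s) := by rw [← List.append_assoc, ← h2, ← g1]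
      exact (List.append_right_inj w).1 this
    refine ⟨w, t, r ++ s', h1, by rw [g2, List.append_assoc], h3, ?_⟩
    intro st hst
    rcases List.mem_append.1 hst with h | h
    · exact h4 st (hts ▸ List.mem_append.2 (Or.inl h))
    · exact g4 st h
  · obtain ⟨r, rfl⟩ := hp
    have hts : s = r ++ t' := by
      have : w₂ ++ s = w₂ ++ (r ++ t') := by rw [← List.append_assoc, ← g1, ← h2]
      exact (List.append_right_inj w₂).1 this
    refine ⟨w₂, r ++ t, s', by rw [h1, List.append_assoc], g2, ?_, g4⟩
    intro st hst
    rcases List.mem_append.1 hst with h | h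
    · exact g3 st (hts ▸ List.mem_append.2 (Or.inl h))
    · exact h3 st h

lemma csimC_refl {X₀ : Set F} (C : Set Agent) (u : COutcome X₀ B) : csimC C u u :=
  fun a _ => csimA_refl a u

lemma csimC_symm {X₀ : Set F} {C : Set Agent} {u v : COutcome X₀ B}
    (h : csimC C u v) : csimC C v u := fun a ha => csimA_symm (h a ha)

lemma csimC_trans {X₀ : Set F} {C : Set Agent} {u v z : COutcome X₀ B}
    (h : csimC C u v) (h' : csimC C v z) : csimC C u z :=
  fun a ha => csimA_trans (h a ha) (h' a ha)

lemma csimC_mono {X₀ : Set F} {C C' : Set Agent} (hsub : C ⊆ C')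
    {u v : COutcome X₀ B} (h : csimC C' u v) : csimC C u v :=
  fun a ha => h a (hsub ha)

lemma crel_equiv (X₀ : Set F) : Equivalence (crel X₀ B) :=
  ⟨fun u => csimC_refl _ u, csimC_symm, csimC_trans⟩

lemma ctoI_eq {X₀ : Set F} {u v : COutcome X₀ B} (h : ctoI u = ctoI v) :
    csimC Set.univ u v := by
  have := Quot.eqvGen_exact h
  rwa [Equivalence.eqvGen_iff (crel_equiv X₀)] at this

/-- From `IsimC` between plays in `CP`, extract `csimC` between their outcomes. -/
lemma IsimC_csimC {X₀ : Set F} {C : Set Agent} {x x' : CPlay X₀ B}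
    (hx : x ∈ CP X₀ B) (hx' : x' ∈ CP X₀ B) (h : IsimC C x.1 x'.1) :
    csimC C x.2.2 x'.2.2 := by
  obtain ⟨u, v, hu, hv, huv⟩ := h
  have h1 : csimC C x.2.2 u :=
    csimC_mono (Set.subset_univ C) (ctoI_eq (hx.1.trans hu.symm))
  have h2 : csimC C v x'.2.2 :=
    csimC_mono (Set.subset_univ C) (ctoI_eq (hv.trans hx'.1.symm))
  exact csimC_trans (csimC_trans h1 huv) h2

end Aux2

section Aux3
variable {Agent V B : Type}
local notation "F" => Formula Agent V

/-! ### More provability helpers -/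

lemma P_dknow_of_self {E : Set Agent} {a : F} :
    Provable (a.imp (Formula.dknow E a)) := by
  have ht : Provable ((Formula.know E a.neg).imp a.neg) := Provable.truthK
  have h1 := P_contra ht
  have t : Provable ((a.neg.neg.imp (Formula.know E a.neg).neg).imp
      (a.imp (Formula.know E a.neg).neg)) :=
    Provable.taut (taut_of _ (by intro v hn hi; simp only [hn, hi]; tauto))
  exact t.mp h1

lemma dknow_mem_iff {X : Set F} (hX : MaxConsistent X) {E : Set Agent} {a : F} :
    Formula.dknow E a ∈ X ↔ Formula.know E a.neg ∉ X := by
  rw [Formula.dknow, hX.neg_mem_iff]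

lemma dknow_empty_not_mem {W : Set F} (hW : MaxConsistent W)
    {C : Set Agent} {ψ : F} :
    Formula.dknow C (Formula.blame C ∅ ψ) ∉ W := by
  intro h
  have h2 : Formula.know C (Formula.blame C ∅ ψ).neg ∈ W :=
    hW.mem_of_provable (Provable.nec Provable.noneToAct)
  exact ((dknow_mem_iff hW).1 h) h2

lemma MaxConsistent.disj_mem_left {X : Set F} (hX : MaxConsistent X) {φ ψ : F}
    (h : φ ∈ X) : φ.disj ψ ∈ X := hX.disj_mem_iff.2 (Or.inl h)

/-! ### K-closure -/

lemma K_collect {X : Set F} (hX : MaxConsistent X) {C : Set Agent} :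
    ∀ (l : List F), (∀ χ ∈ l, Formula.know C χ ∈ X) →
    ∀ {θ : F}, ProvableFrom {χ | χ ∈ l} θ → Formula.know C θ ∈ X := by
  intro l
  induction l with
  | nil =>
    intro _ θ h
    have : ProvableFrom (∅ : Set F) θ := by
      have he : {χ : F | χ ∈ ([] : List F)} = (∅ : Set F) := by ext; simp
      rwa [he] at h
    exact hX.mem_of_provable (Provable.nec (PF_empty this))
  | cons ψ l ih =>
    intro hl θ h
    have he : {χ : F | χ ∈ ψ :: l} = insert ψ {χ : F | χ ∈ l} := by ext; simp
    rw [he] at h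
    have h1 : Formula.know C (ψ.imp θ) ∈ X :=
      ih (fun χ hχ => hl χ (List.mem_cons_of_mem _ hχ)) (PF_ded h)
    exact hX.mp' (hX.mpp Provable.distr h1) (hl ψ (List.mem_cons_self))

lemma know_of_PF_closure {X : Set F} (hX : MaxConsistent X) {C : Set Agent} {θ : F}
    (h : ProvableFrom {χ : F | Formula.know C χ ∈ X} θ) : Formula.know C θ ∈ X := by
  obtain ⟨l, hl, hp⟩ := PF_compact h
  exact K_collect hX l hl hp

/-! ### Child outcomes -/

def child {X₀ : Set F} (u : COutcome X₀ B) (C : Set Agent) (b : B) (Y : Set F)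
    (hY : MaxConsistent Y) (hsub : ∀ χ : F, Formula.know C χ ∈ chd u → χ ∈ Y) :
    COutcome X₀ B :=
  ⟨u.1 ++ [(C, b, Y)], by
    rw [validSeq_append]
    exact ⟨u.2, hY, fun χ h => hsub χ h, trivial⟩⟩

lemma chd_child {X₀ : Set F} (u : COutcome X₀ B) (C : Set Agent) (b : B) (Y : Set F)
    (hY : MaxConsistent Y) (hsub : ∀ χ : F, Formula.know C χ ∈ chd u → χ ∈ Y) :
    chd (child u C b Y hY hsub) = Y := by
  show hdSeq X₀ (u.1 ++ [(C, b, Y)]) = Y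
  rw [hdSeq_append]; rfl

lemma csimC_child {X₀ : Set F} (u : COutcome X₀ B) (C : Set Agent) (b : B) (Y : Set F)
    (hY : MaxConsistent Y) (hsub : ∀ χ : F, Formula.know C χ ∈ chd u → χ ∈ Y) :
    csimC C u (child u C b Y hY hsub) := by
  intro a ha
  refine ⟨u.1, [], [(C, b, Y)], by simp, rfl, by simp, ?_⟩
  intro st hst
  rcases List.mem_singleton.1 hst with rfl
  exact ha

/-! ### Trivial plays -/

lemma CP_triv {X₀ : Set F} (hX₀ : MaxConsistent X₀) (w : COutcome X₀ B)
    (bad : F) (hbad : Provable bad.neg) :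
    ((ctoI w, fun _ => (bad, (∅ : Set Agent), w), w) : CPlay X₀ B) ∈ CP X₀ B := by
  refine ⟨rfl, ?_⟩
  intro v C D ψ hK hδ _
  rcases Set.eq_empty_or_nonempty D with rfl | ⟨a, ha⟩
  · exact absurd hK (dknow_empty_not_mem (chd_mcs hX₀ v))
  · have h := hδ a ha
    have : bad = ψ := congrArg Prod.fst h
    subst this
    exact (chd_mcs hX₀ w).mem_of_provable hbad

/-! ### Disjunction folding -/

def orFold (h : F) (l : List F) : F := l.foldl Formula.disj h

lemma PF_orFold {S : Set F} :
    ∀ (l : List F) (h : F), ¬ Consistent (S ∪ {χ : F | ∃ d ∈ h :: l, d.neg = χ}) →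
    ProvableFrom S (orFold h l) := by
  intro l
  induction l with
  | nil =>
    intro h hincon
    have hset : S ∪ {χ : F | ∃ d ∈ [h], d.neg = χ} = insert h.neg S := by
      ext χ; simp [or_comm]
    rw [hset] at hincon
    have h1 : ProvableFrom (insert h.neg S) h := incon_all hincon h
    have h2 := PF_ded h1
    have t : Provable ((h.neg.imp h).imp h) :=
      Provable.taut (taut_of _ (by intro v hn hi; simp only [hn, hi]; tauto))
    exact (PF_of_provable t).mp h2
  | cons χ l ih =>
    intro h hincon
    show ProvableFrom S (orFold (h.disj χ) l)
    apply ih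
    intro hcons
    apply hincon
    intro ⟨ξ, h1, h2⟩
    set T := S ∪ {χ' : F | ∃ d ∈ (h.disj χ) :: l, d.neg = χ'} with hT
    have hcut : ∀ ρ ∈ S ∪ {χ' : F | ∃ d ∈ h :: χ :: l, d.neg = χ'}, ProvableFrom T ρ := by
      rintro ρ (hρ | ⟨d, hd, rfl⟩)
      · exact ProvableFrom.hyp (Or.inl hρ)
      · have hdisj : ProvableFrom T (h.disj χ).neg :=
          ProvableFrom.hyp (Or.inr ⟨h.disj χ, List.mem_cons_self, rfl⟩)
        rcases List.mem_cons.1 hd with rfl | hd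
        · have t : Provable ((d.disj χ).neg.imp d.neg) :=
            Provable.taut (taut_of _ (by
              intro v hn hi; simp only [Formula.disj, hn, hi]; tauto))
          exact (PF_of_provable t).mp hdisj
        rcases List.mem_cons.1 hd with rfl | hd
        · have t : Provable ((h.disj d).neg.imp d.neg) :=
            Provable.taut (taut_of _ (by
              intro v hn hi; simp only [Formula.disj, hn, hi]; tauto))
          exact (PF_of_provable t).mp hdisj
        · exact ProvableFrom.hyp (Or.inr ⟨d, List.mem_cons_of_mem _ hd, rfl⟩)
    exact hcons ⟨ξ, PF_cut hcut h1, PF_cut hcut h2⟩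

lemma orFold_mem {X : Set F} (hX : MaxConsistent X) :
    ∀ (l : List F) (h : F), orFold h l ∈ X → h ∈ X ∨ ∃ χ ∈ l, χ ∈ X := by
  intro l
  induction l with
  | nil => intro h hm; exact Or.inl hm
  | cons χ l ih =>
    intro h hm
    rcases ih (h.disj χ) hm with hd | ⟨ξ, h1, h2⟩
    · rcases hX.disj_mem_iff.1 hd with h' | h'
      · exact Or.inl h'
      · exact Or.inr ⟨χ, List.mem_cons_self, h'⟩
    · exact Or.inr ⟨ξ, List.mem_cons_of_mem _ h1, h2⟩

/-! ### Chaining Joint Responsibility -/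

lemma chain_blame {X : Set F} (hX : MaxConsistent X) (C D : Set Agent) :
    ∀ (r : List (Set Agent × Set Agent × F)) (θ : F) (Fa : Set Agent),
    Formula.blame C Fa θ ∈ X → θ ∈ X → Fa ⊆ D →
    (∀ p ∈ r, p.1 ⊆ C ∧ p.2.1 ⊆ D ∧
      Formula.dknow p.1 (Formula.blame p.1 p.2.1 p.2.2) ∈ X) →
    (∀ p ∈ r, Fa ∩ p.2.1 = ∅) →
    List.Pairwise (fun p q => p.2.1 ∩ q.2.1 = ∅) r →
    ∃ F' : Set Agent, F' ⊆ D ∧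
      Formula.blame C F' (orFold θ (r.map (fun p => p.2.2))) ∈ X := by
  intro r
  induction r with
  | nil => intro θ Fa h1 _ h3 _ _ _; exact ⟨Fa, h3, h1⟩
  | cons p r ih =>
    intro θ Fa hb hθ hFa hr hdis hpw
    obtain ⟨hpC, hpD, hpK⟩ := hr p (List.mem_cons_self)
    have hk1 : Formula.dknow C (Formula.blame C Fa θ) ∈ X :=
      hX.mpp P_dknow_of_self hb
    have hconj := hX.conj_mem hk1 hpK
    have hjr := @Provable.jointResp Agent V C Fa p.1 p.2.1 θ p.2.2
      (hdis p (List.mem_cons_self))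
    have himp := hX.mpp hjr hconj
    have hdm : θ.disj p.2.2 ∈ X := hX.disj_mem_left hθ
    have hb2 : Formula.blame (C ∪ p.1) (Fa ∪ p.2.1) (θ.disj p.2.2) ∈ X :=
      hX.mp' himp hdm
    rw [Set.union_eq_left.2 hpC] at hb2
    have := ih (θ.disj p.2.2) (Fa ∪ p.2.1) hb2 hdm
      (Set.union_subset hFa hpD)
      (fun q hq => hr q (List.mem_cons_of_mem _ hq))
      (fun q hq => by
        rw [Set.union_inter_distrib_right, hdis q (List.mem_cons_of_mem _ hq),
          (List.pairwise_cons.1 hpw).1 q hq, Set.union_empty])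
      (List.pairwise_cons.1 hpw).2
    simpa [orFold] using this

/-! ### Fresh element of B -/

lemma exists_fresh (hB : Cardinal.mk Agent < Cardinal.mk B) (f : Agent → B) :
    ∃ b : B, ∀ a : Agent, f a ≠ b := by
  by_contra h
  push_neg at h
  have hsurj : Function.Surjective f := fun b => h b
  exact absurd (Cardinal.mk_le_of_surjective hsurj) (not_le.2 hB)

lemma nonempty_B (hB : Cardinal.mk Agent < Cardinal.mk B) : Nonempty B := by
  rw [← Cardinal.mk_ne_zero_iff]
  intro h
  rw [h] at hB
  exact absurd hB (by simp)

end Aux3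

section Aux4
variable {Agent V B : Type}
local notation "Fm" => Formula Agent V

lemma PF_all_of_pair {X : Set Fm} {χ : Fm} (h1 : ProvableFrom X χ)
    (h2 : ProvableFrom X χ.neg) (ψ : Fm) : ProvableFrom X ψ := by
  have t : Provable (χ.imp (χ.neg.imp ψ)) :=
    Provable.taut (taut_of _ (by intro v hn hi; simp only [hn, hi]; tauto))
  exact ((PF_of_provable t).mp h1).mp h2

lemma P_notbad {φ : Fm} : Provable (Formula.neg (Formula.neg (φ.imp φ))) :=
  Provable.taut (taut_of _ (by intro v hn hi; simp only [hn, hi]; tauto))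

end Aux4

theorem induction_lemma' {Agent V B : Type}
    (hB : Cardinal.mk Agent < Cardinal.mk B)
    (X₀ : Set (Formula Agent V)) (hX₀ : MaxConsistent X₀) :
    ∀ (φ : Formula Agent V) (x : CPlay X₀ B), x ∈ CP X₀ B →
      (CSat X₀ B φ x ↔ φ ∈ chd x.2.2) := by
  classical
  intro φ
  induction φ with
  | var p =>
    intro x hx
    constructor
    · intro h; exact h.2
    · intro h; exact ⟨hx, h⟩
  | neg φ ih =>
    intro x hx
    have hmcs := chd_mcs hX₀ x.2.2
    show (¬ CSat X₀ B φ x) ↔ _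
    rw [ih x hx, hmcs.neg_mem_iff]
  | imp φ ψ ihφ ihψ =>
    intro x hx
    have hmcs := chd_mcs hX₀ x.2.2
    show (CSat X₀ B φ x → CSat X₀ B ψ x) ↔ _
    rw [ihφ x hx, ihψ x hx, hmcs.imp_mem_iff]
  | know C φ ih =>
    intro x hx
    have hmcs := chd_mcs hX₀ x.2.2
    constructor
    · intro h
      by_contra hmem
      set Z : Set (Formula Agent V) := {χ | Formula.know C χ ∈ chd x.2.2} with hZdef
      have hcons : Consistent (insert φ.neg Z) := by
        intro ⟨χ, h1, h2⟩
        have hPφ : ProvableFrom (insert φ.neg Z) φ := PF_all_of_pair h1 h2 φ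
        have hded := PF_ded hPφ
        have t : Provable ((φ.neg.imp φ).imp φ) :=
          Provable.taut (taut_of _ (by intro v hn hi; simp only [hn, hi]; tauto))
        have : ProvableFrom Z φ := (PF_of_provable t).mp hded
        exact hmem (know_of_PF_closure hmcs this)
      obtain ⟨Y, hY1, hY2⟩ := lindenbaum hcons
      have hsub : ∀ χ : Formula Agent V, Formula.know C χ ∈ chd x.2.2 → χ ∈ Y :=
        fun χ hχ => hY1 (Set.mem_insert_of_mem _ hχ)
      obtain ⟨b⟩ := nonempty_B hB
      set ω' := child x.2.2 C b Y hY2 hsub with hω'def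
      have hx' : ((ctoI ω', fun _ => ((φ.imp φ).neg, (∅ : Set Agent), ω'), ω') :
          CPlay X₀ B) ∈ CP X₀ B := CP_triv hX₀ ω' _ P_notbad
      have hsim : IsimC C x.1 (ctoI ω') :=
        ⟨x.2.2, ω', hx.1, rfl, csimC_child _ _ _ _ _ _⟩
      have hsat := h _ hx' hsim
      rw [ih _ hx'] at hsat
      have : φ ∈ Y := by
        rwa [show chd ω' = Y from chd_child _ _ _ _ _ _] at hsat
      exact hY2.not_both this (hY1 (Set.mem_insert _ _))
    · intro h x' hx' hsim
      have hcs := IsimC_csimC hx hx' hsim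
      have h2 : Formula.know C φ ∈ chd x'.2.2 := (know_propagate hX₀ hcs φ).1 h
      exact (ih x' hx').2 ((chd_mcs hX₀ x'.2.2).mpp Provable.truthK h2)
  | blame C D φ ih =>
    intro x hx
    have hmcs := chd_mcs hX₀ x.2.2
    constructor
    · rintro ⟨hsatφ, s, hs⟩
      by_contra hmem
      have hφX : φ ∈ chd x.2.2 := (ih x hx).1 hsatφ
      have hnB : (Formula.blame C D φ).neg ∈ chd x.2.2 := hmcs.neg_mem_iff.2 hmem
      set cls : Agent → Set Agent := fun a => {a' | a' ∈ D ∧ s a' = s a} with hclsdef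
      have hclsD : ∀ a, cls a ⊆ D := fun a a' ha' => ha'.1
      have hclsdisj : ∀ a a', s a ≠ s a' → cls a ∩ cls a' = ∅ := by
        intro a a' hne
        rw [Set.eq_empty_iff_forall_notMem]
        rintro a'' ⟨⟨_, h1⟩, ⟨_, h2⟩⟩
        exact hne (h1.symm.trans h2)
      set G : Set Agent := {a | a ∈ D ∧ (s a).2.1 ⊆ C ∧
        csimC (s a).2.1 x.2.2 (s a).2.2 ∧
        ∃ D' : Set Agent, D' ⊆ cls a ∧
          Formula.dknow (s a).2.1 (Formula.blame (s a).2.1 D' (s a).1) ∈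
            chd (s a).2.2} with hGdef
      set Z : Set (Formula Agent V) := {χ | Formula.know C χ ∈ chd x.2.2} with hZdef
      set N : Set (Formula Agent V) := {χ | ∃ a ∈ G, ((s a).1).neg = χ} with hNdef
      set Y₀ : Set (Formula Agent V) := insert φ (Z ∪ N) with hY₀def
      have hGK : ∀ a ∈ G, Formula.dknow (s a).2.1
          (Formula.blame (s a).2.1 (cls a) (s a).1) ∈ chd x.2.2 := by
        rintro a ⟨haD, hCa, hsima, D', hD', hK⟩
        have h1 : Formula.dknow (s a).2.1
            (Formula.blame (s a).2.1 (cls a) (s a).1) ∈ chd (s a).2.2 :=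
          (chd_mcs hX₀ (s a).2.2).mpp
            (P_dkmap (Provable.monoB (subset_refl _) hD')) hK
        exact dknow_propagate hX₀ (csimC_symm hsima) h1
      -- consistency of Y₀
      have hY₀cons : Consistent Y₀ := by
        intro ⟨χ0, hχ1, hχ2⟩
        obtain ⟨l1, hl1, hp1⟩ := PF_compact hχ1
        obtain ⟨l2, hl2, hp2⟩ := PF_compact hχ2
        -- build a finite list of agents covering the threats used
        have buildA : ∀ m : List (Formula Agent V), (∀ ρ ∈ m, ρ ∈ Y₀) →
            ∃ A : List Agent, (∀ a ∈ A, a ∈ G) ∧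
              A.Pairwise (fun a a' => s a ≠ s a') ∧
              ∀ ρ ∈ m, ρ ∈ insert φ (Z ∪ {χ | ∃ a ∈ A, ((s a).1).neg = χ}) := by
          intro m
          induction m with
          | nil => intro _; exact ⟨[], by simp, by simp, by simp⟩
          | cons ρ m ihm =>
            intro hmem'
            obtain ⟨A, hA1, hA2, hA3⟩ := ihm (fun ρ' h => hmem' ρ' (List.mem_cons_of_mem _ h))
            rcases hmem' ρ (List.mem_cons_self) with hρ | hρ | hρ
            · exact ⟨A, hA1, hA2, fun ρ' h' => by
                rcases List.mem_cons.1 h' with rfl | h'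
                · exact Or.inl hρ
                · exact hA3 ρ' h'⟩
            · exact ⟨A, hA1, hA2, fun ρ' h' => by
                rcases List.mem_cons.1 h' with rfl | h'
                · exact Or.inr (Or.inl hρ)
                · exact hA3 ρ' h'⟩
            · obtain ⟨a, haG, haρ⟩ := hρ
              by_cases hrep : ∃ a' ∈ A, s a' = s a
              · obtain ⟨a', ha'A, ha'⟩ := hrep
                refine ⟨A, hA1, hA2, fun ρ' h' => ?_⟩
                rcases List.mem_cons.1 h' with rfl | h'
                · exact Or.inr (Or.inr ⟨a', ha'A, by rw [ha']; exact haρ⟩)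
                · exact hA3 ρ' h'
              · push_neg at hrep
                refine ⟨a :: A, ?_, ?_, ?_⟩
                · intro a' h'
                  rcases List.mem_cons.1 h' with rfl | h'
                  · exact haG
                  · exact hA1 a' h'
                · exact List.pairwise_cons.2
                    ⟨fun a' h' => fun he => hrep a' h' he.symm, hA2⟩
                · intro ρ' h'
                  rcases List.mem_cons.1 h' with rfl | h'
                  · exact Or.inr (Or.inr ⟨a, List.mem_cons_self, haρ⟩)
                  · rcases hA3 ρ' h' with h | h | ⟨a', h1, h2⟩
                    · exact Or.inl h
                    · exact Or.inr (Or.inl h)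
                    · exact Or.inr (Or.inr ⟨a', List.mem_cons_of_mem _ h1, h2⟩)
        obtain ⟨A, hA1, hA2, hA3⟩ := buildA (l1 ++ l2) (fun ρ h => by
          rcases List.mem_append.1 h with h | h
          · exact hl1 ρ h
          · exact hl2 ρ h)
        -- the inconsistency transfers to the finitized set
        have hS1 : ∀ A' : List Agent, (∀ a, a ∈ A' ↔ a ∈ A) →
            ¬ Consistent ((insert φ Z) ∪
              {χ | ∃ d ∈ A'.map (fun a => (s a).1), d.neg = χ}) := by
          intro A' hmemA hc
          have hsub1 : {ψ | ψ ∈ l1} ⊆ (insert φ Z) ∪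
              {χ | ∃ d ∈ A'.map (fun a => (s a).1), d.neg = χ} := by
            intro ρ hρ
            rcases hA3 ρ (List.mem_append.2 (Or.inl hρ)) with h | h | ⟨a, h1, h2⟩
            · exact Or.inl (by rw [h]; exact Set.mem_insert _ _)
            · exact Or.inl (Set.mem_insert_of_mem _ h)
            · exact Or.inr ⟨(s a).1, List.mem_map.2 ⟨a, (hmemA a).2 h1, rfl⟩, h2⟩
          have hsub2 : {ψ | ψ ∈ l2} ⊆ (insert φ Z) ∪
              {χ | ∃ d ∈ A'.map (fun a => (s a).1), d.neg = χ} := by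
            intro ρ hρ
            rcases hA3 ρ (List.mem_append.2 (Or.inr hρ)) with h | h | ⟨a, h1, h2⟩
            · exact Or.inl (by rw [h]; exact Set.mem_insert _ _)
            · exact Or.inl (Set.mem_insert_of_mem _ h)
            · exact Or.inr ⟨(s a).1, List.mem_map.2 ⟨a, (hmemA a).2 h1, rfl⟩, h2⟩
          exact hc ⟨χ0, PF_mono hsub1 hp1, PF_mono hsub2 hp2⟩
        -- A cannot be empty
        rcases A with _ | ⟨a, A'⟩
        · have h0 := hS1 [] (by simp)
          have : ¬ Consistent (insert φ Z) := by
            intro hc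
            apply h0
            intro ⟨ξ, k1, k2⟩
            have hss : (insert φ Z) ∪
                {χ | ∃ d ∈ ([] : List Agent).map (fun a => (s a).1), d.neg = χ} =
                insert φ Z := by simp
            rw [hss] at k1 k2
            exact hc ⟨ξ, k1, k2⟩
          have hPφ : ProvableFrom (insert φ Z) φ.neg := incon_all this φ.neg
          have hded := PF_ded hPφ
          have t : Provable ((φ.imp φ.neg).imp φ.neg) :=
            Provable.taut (taut_of _ (by intro v hn hi; simp only [hn, hi]; tauto))
          have hknow : Formula.know C φ.neg ∈ chd x.2.2 :=
            know_of_PF_closure hmcs ((PF_of_provable t).mp hded)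
          have : φ.neg ∈ chd x.2.2 := hmcs.mpp Provable.truthK hknow
          exact hmcs.not_both hφX this
        -- round 1 : find a disjunct in X
        have hround : ∀ (a0 : Agent) (A0 : List Agent), (∀ a', a' ∈ a0 :: A0 ↔ a' ∈ a :: A') →
            Formula.know C (φ.imp (orFold ((s a0).1) (A0.map (fun a' => (s a').1)))) ∈
              chd x.2.2 := by
          intro a0 A0 hmemA
          have hincon := hS1 (a0 :: A0) hmemA
          have hseteq : (insert φ Z) ∪
              {χ | ∃ d ∈ (a0 :: A0).map (fun a' => (s a').1), d.neg = χ} =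
              (insert φ Z) ∪ {χ | ∃ d ∈ ((s a0).1) :: A0.map (fun a' => (s a').1),
                d.neg = χ} := by
            simp [List.map_cons]
          rw [hseteq] at hincon
          have hor := PF_orFold (A0.map (fun a' => (s a').1)) ((s a0).1) hincon
          have hded := PF_ded hor
          exact know_of_PF_closure hmcs hded
        have h1 := hround a A' (fun a' => Iff.rfl)
        have himpX : φ.imp (orFold ((s a).1) (A'.map (fun a' => (s a').1))) ∈ chd x.2.2 :=
          hmcs.mpp Provable.truthK h1
        have hθX : orFold ((s a).1) (A'.map (fun a' => (s a').1)) ∈ chd x.2.2 :=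
          hmcs.mp' himpX hφX
        have hex : ∃ a0 ∈ a :: A', (s a0).1 ∈ chd x.2.2 := by
          rcases orFold_mem hmcs _ _ hθX with h | ⟨ξ, h1', h2'⟩
          · exact ⟨a, List.mem_cons_self, h⟩
          · obtain ⟨a', ha', rfl⟩ := List.mem_map.1 h1'
            exact ⟨a', List.mem_cons_of_mem _ ha', h2'⟩
        obtain ⟨a0, ha0A, ha0X⟩ := hex
        -- round 2 : reorder with a0 first
        have hperm : List.Perm (a :: A') (a0 :: (a :: A').erase a0) :=
          List.perm_cons_erase ha0A
        have hk2 := hround a0 ((a :: A').erase a0) (fun a' => (hperm.mem_iff (a := a')).symm)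
        set θ₂ := orFold ((s a0).1) (((a :: A').erase a0).map (fun a' => (s a').1)) with hθ₂def
        have himpX2 : φ.imp θ₂ ∈ chd x.2.2 := hmcs.mpp Provable.truthK hk2
        have hθ₂X : θ₂ ∈ chd x.2.2 := hmcs.mp' himpX2 hφX
        -- base blame
        have ha0G : a0 ∈ G := hA1 a0 (hperm.mem_iff.2 (List.mem_cons_self))
        have hbase0 : Formula.blame ((s a0).2.1) (cls a0) ((s a0).1) ∈ chd x.2.2 :=
          hmcs.mp' (hmcs.mpp P_blame_of_dknow (hGK a0 ha0G)) ha0X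
        have hbase : Formula.blame C (cls a0) ((s a0).1) ∈ chd x.2.2 :=
          hmcs.mpp (Provable.monoB ha0G.2.1 (subset_refl _)) hbase0
        -- pairwise for the reordered list
        have hpw2 : (a0 :: (a :: A').erase a0).Pairwise (fun a' a'' => s a' ≠ s a'') := by
          exact (hperm.pairwise_iff (fun {a' a''} h he => h he.symm)).1 hA2
        have hchain := chain_blame hmcs C D
          (((a :: A').erase a0).map (fun a' => ((s a').2.1, cls a', (s a').1)))
          ((s a0).1) (cls a0) hbase ha0X (hclsD a0)
          (by
            rintro p hp
            obtain ⟨a', ha', rfl⟩ := List.mem_map.1 hp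
            have ha'G : a' ∈ G := hA1 a' (hperm.mem_iff.2 (List.mem_cons_of_mem _ ha'))
            exact ⟨ha'G.2.1, hclsD a', hGK a' ha'G⟩)
          (by
            rintro p hp
            obtain ⟨a', ha', rfl⟩ := List.mem_map.1 hp
            exact hclsdisj a0 a' ((List.pairwise_cons.1 hpw2).1 a' ha'))
          (by
            have := (List.pairwise_cons.1 hpw2).2
            rw [List.pairwise_map]
            exact this.imp (fun h => hclsdisj _ _ h))
        obtain ⟨F', hF'D, hblame⟩ := hchain
        have hlmap : (((a :: A').erase a0).map
            (fun a' => ((s a').2.1, cls a', (s a').1))).map (fun p => p.2.2) =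
            ((a :: A').erase a0).map (fun a' => (s a').1) := by
          rw [List.map_map]; rfl
        rw [hlmap] at hblame
        -- strict conditional
        have hsc := @Provable.strictCond Agent V C F' φ θ₂
        have hBφ : Formula.blame C F' φ ∈ chd x.2.2 :=
          hmcs.mp' (hmcs.mp' (hmcs.mpp hsc hk2) hblame) hφX
        have : Formula.blame C D φ ∈ chd x.2.2 :=
          hmcs.mpp (Provable.monoB (subset_refl _) hF'D) hBφ
        exact hmcs.not_both this hnB
      -- extend Y₀ to a maximal consistent set and build the child outcome
      obtain ⟨Y, hY1, hY2⟩ := lindenbaum hY₀cons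
      have hsub : ∀ χ : Formula Agent V, Formula.know C χ ∈ chd x.2.2 → χ ∈ Y :=
        fun χ hχ => hY1 (Set.mem_insert_of_mem _ (Or.inl hχ))
      obtain ⟨b0⟩ := nonempty_B hB
      set len := x.2.2.1.length with hlendef
      set fB : Agent → B := fun a => match (s a).2.2.1[len]? with
        | some st => st.2.1
        | none => b0 with hfBdef
      obtain ⟨b, hb⟩ := exists_fresh hB fB
      set ω' := child x.2.2 C b Y hY2 hsub with hω'def
      have hω'1 : ω'.1 = x.2.2.1 ++ [(C, b, Y)] := rfl
      have hchd : chd ω' = Y := chd_child _ _ _ _ _ _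
      set δ' : Agent → CAct X₀ B := fun a =>
        if a ∈ D then s a else ((φ.imp φ).neg, (∅ : Set Agent), ω') with hδ'def
      have hx'CP : ((ctoI ω', δ', ω') : CPlay X₀ B) ∈ CP X₀ B := by
        refine ⟨rfl, ?_⟩
        intro v C' D'' ψ hK hδ hsim'
        show ψ.neg ∈ chd ω'
        rcases Set.eq_empty_or_nonempty D'' with rfl | ⟨a1, ha1⟩
        · exact absurd hK (dknow_empty_not_mem (chd_mcs hX₀ v))
        by_cases hDD : ∀ a' ∈ D'', a' ∈ D
        · have ha1D := hDD a1 ha1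
          have hsa1 : s a1 = (ψ, C', v) := by
            have h : δ' a1 = (ψ, C', v) := hδ a1 ha1
            rwa [show δ' a1 = s a1 from if_pos ha1D] at h
          have hcomp : (s a1).1 = ψ ∧ (s a1).2.1 = C' ∧ (s a1).2.2 = v := by
            rw [hsa1]; exact ⟨rfl, rfl, rfl⟩
          have hD''cls : D'' ⊆ cls a1 := by
            intro a' ha'
            refine ⟨hDD a' ha', ?_⟩
            have h : δ' a' = (ψ, C', v) := hδ a' ha'
            rw [show δ' a' = s a' from if_pos (hDD a' ha')] at h
            rw [h, hsa1]
          have hKa1 : Formula.dknow ((s a1).2.1)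
              (Formula.blame ((s a1).2.1) D'' ((s a1).1)) ∈ chd ((s a1).2.2) := by
            rw [hcomp.1, hcomp.2.1, hcomp.2.2]; exact hK
          have hmain : a1 ∈ G → ψ.neg ∈ chd ω' := by
            intro haG
            rw [hchd]
            exact hY1 (Set.mem_insert_of_mem _ (Or.inr ⟨a1, haG, by rw [hcomp.1]⟩))
          rcases Set.eq_empty_or_nonempty C' with rfl | hC'ne
          · apply hmain
            refine ⟨ha1D, ?_, ?_, D'', hD''cls, hKa1⟩
            · rw [hcomp.2.1]; exact Set.empty_subset C
            · rw [hcomp.2.1]; intro a' ha'; exact absurd ha' (Set.notMem_empty a')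
          · obtain ⟨p, t, t', hω, hv', hlt, hlt'⟩ := csimC_decomp hsim'
            rcases List.eq_nil_or_concat t with rfl | ⟨t₀, st, rfl⟩
            · -- v extends ω' : contradicts freshness of b
              exfalso
              have hveq : v.1 = x.2.2.1 ++ ((C, b, Y) :: t') := by
                rw [List.append_nil] at hω
                rw [hv', ← hω, hω'1]
                simp
              have hget : v.1[len]? = some (C, b, Y) := by
                rw [hveq, List.getElem?_append_right (le_refl len)]
                show ((C, b, Y) :: t')[len - len]? = some (C, b, Y)
                simp
              apply hb a1
              rw [hfBdef]
              simp only [hcomp.2.2, hget]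
            · -- the path passes through x.2.2
              have hmemc : ∀ st' : Step Agent V B, st' ∈ t₀ ++ [st] → st' ∈ t₀.concat st :=
                fun st' h' => by rwa [List.concat_eq_append]
              have happ : (p ++ t₀) ++ [st] = x.2.2.1 ++ [(C, b, Y)] := by
                rw [List.append_assoc, ← List.concat_eq_append, ← hω, hω'1]
              have hinj := List.append_inj' happ rfl
              have hst : st = (C, b, Y) := by
                have := hinj.2
                exact List.cons.inj this |>.1
              have hpt0 : x.2.2.1 = p ++ t₀ := hinj.1.symm
              apply hmain
              refine ⟨ha1D, ?_, ?_, D'', hD''cls, hKa1⟩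
              · rw [hcomp.2.1]
                intro a' ha'
                have := hlt st (hmemc st (List.mem_append.2 (Or.inr (List.mem_singleton.2 rfl)))) a' ha'
                rw [hst] at this
                exact this
              · rw [hcomp.2.1, hcomp.2.2]
                intro a' ha'
                exact ⟨p, t₀, t', hpt0, hv',
                  fun st' h' => hlt st' (hmemc st' (List.mem_append.2 (Or.inl h'))) a' ha',
                  fun st' h' => hlt' st' h' a' ha'⟩
        · push_neg at hDD
          obtain ⟨a1', ha1'', ha1D'⟩ := hDD
          have h : δ' a1' = (ψ, C', v) := hδ a1' ha1''
          rw [show δ' a1' = ((φ.imp φ).neg, (∅ : Set Agent), ω') from if_neg ha1D'] at h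
          have hψ : (φ.imp φ).neg = ψ := congrArg Prod.fst h
          rw [hchd, ← hψ]
          exact hY2.mem_of_provable P_notbad
      -- apply the strategy property to the constructed play
      have hsim : IsimC C x.1 (ctoI ω') :=
        ⟨x.2.2, ω', hx.1, rfl, csimC_child _ _ _ _ _ _⟩
      have heq : ∀ a ∈ D, s a = δ' a := fun a ha => (if_pos ha).symm
      have hns := hs _ hx'CP hsim heq
      apply hns
      rw [ih _ hx'CP]
      show φ ∈ chd ω'
      rw [hchd]
      exact hY1 (Set.mem_insert _ _)
    · intro h
      have hφX : φ ∈ chd x.2.2 := hmcs.mpp Provable.truthB h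
      refine ⟨(ih x hx).2 hφX, fun _ => (φ, C, x.2.2), ?_⟩
      intro x' hx' hsim heq
      have hK : Formula.dknow C (Formula.blame C D φ) ∈ chd x.2.2 :=
        hmcs.mpp P_dknow_of_self h
      have hcs : csimC C x'.2.2 x.2.2 := csimC_symm (IsimC_csimC hx hx' hsim)
      have hδ : ∀ a ∈ D, x'.2.1 a = (φ, C, x.2.2) := fun a ha => (heq a ha).symm
      have hneg := hx'.2 x.2.2 C D φ hK hδ hcs
      intro hsat
      exact (chd_mcs hX₀ x'.2.2).not_both ((ih x' hx').1 hsat) hneg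

/-- Lemma 19, induction/truth lemma: in the canonical game G(X₀), for
    any play (α,δ,ω) ∈ P and any formula φ, (α,δ,ω) ⊩ φ iff φ ∈ hd(ω). -/
theorem induction_lemma {Agent V B : Type}
    (hB : Cardinal.mk Agent < Cardinal.mk B)
    (X₀ : Set (Formula Agent V)) (hX₀ : MaxConsistent X₀)
    (x : CPlay X₀ B) (hx : x ∈ CP X₀ B) (φ : Formula Agent V) :
    CSat X₀ B φ x ↔ φ ∈ chd x.2.2 :=
  induction_lemma' hB X₀ hX₀ φ x hx

end DutyToWarn
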